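/- Theorem 3.2(i) (finite length in ran Q): Assume 2ν > β. Let (x_k) be a sequence in H satisfying the G-FBS iteration Q x_k − B x_k − Q x_{k+1} ∈ A x_{k+1} for every k ∈ ℕ, and let x⋆ ∈ H satisfy −B x⋆ ∈ A x⋆. Then for every K ∈ ℕ, ∑_{k=0}^{K} ⟪Q(x_{k+1} − x_k), x_{k+1} − x_k⟫ ≤ (2ν/(2ν − β)) · ⟪Q(x_0 − x⋆), x_0 − x⋆⟫; in particular the series ∑_{k=0}^{∞} ‖x_{k+1} − x_k‖_Q² converges. -/

import Mathlib

open RealInnerProductSpace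

/-- Cauchy–Schwarz for a positive semidefinite symmetric form. -/
lemma csQ_aux {H : Type*} [NormedAddCommGroup H] [InnerProductSpace ℝ H]
    (Q : H →L[ℝ] H) (hQsym : ∀ x y : H, ⟪Q x, y⟫ = ⟪x, Q y⟫)
    (hQpos : ∀ x : H, 0 ≤ ⟪Q x, x⟫) (a b : H) :
    ⟪Q a, b⟫ ^ 2 ≤ ⟪Q a, a⟫ * ⟪Q b, b⟫ := by
  have hsym : ⟪Q b, a⟫ = ⟪Q a, b⟫ := by
    rw [hQsym b a, real_inner_comm]
  have h : ∀ t : ℝ, 0 ≤ ⟪Q b, b⟫ * (t * t) + (2 * ⟪Q a, b⟫) * t + ⟪Q a, a⟫ := by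
    intro t
    have h0 := hQpos (t • b + a)
    simp only [map_add, map_smul, inner_add_left, inner_add_right,
      real_inner_smul_left, real_inner_smul_right,
      ContinuousLinearMap.coe_smul', Pi.smul_apply, smul_eq_mul] at h0
    rw [hsym] at h0
    nlinarith [h0]
  have hd := discrim_le_zero h
  unfold discrim at hd
  nlinarith [hd]

/-- The purely scalar inequality at the heart of the per-step estimate. -/
lemma realkey_aux (ν β P t c D E s : ℝ) (hν : 0 < ν) (hβ : 0 < β)
    (hP : 0 ≤ P) (hD : 0 ≤ D) (hs : 0 ≤ s)
    (h1 : P ≤ β * c) (h2 : ν * s ≤ P) (h3 : t ^ 2 ≤ s * D)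
    (h4 : 2 * (c + t) ≤ E - D) : (2 * ν - β) * D ≤ 2 * ν * E := by
  have ht2 : (ν * t) ^ 2 ≤ ν * P * D := by
    nlinarith [mul_le_mul_of_nonneg_left h3 (sq_nonneg ν),
      mul_le_mul_of_nonneg_right h2 (mul_nonneg hν.le hD)]
  have key : 0 ≤ 4 * ν * P + 4 * ν * β * t + β ^ 2 * D := by
    by_contra hlt
    push_neg at hlt
    have hT : 0 < 4 * ν * P - 4 * ν * β * t + β ^ 2 * D := by
      nlinarith [mul_nonneg hν.le hP, mul_nonneg (sq_nonneg β) hD]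
    nlinarith [mul_pos (neg_pos.mpr hlt) hT, sq_nonneg (4 * ν * P - β ^ 2 * D),
      mul_le_mul_of_nonneg_left ht2 (by positivity : (0:ℝ) ≤ 16 * β ^ 2)]
  have hmul : β * ((2 * ν - β) * D) ≤ β * (2 * ν * E) := by
    nlinarith [mul_le_mul_of_nonneg_left h4 (mul_pos hβ hν).le,
      mul_le_mul_of_nonneg_left h1 (by positivity : (0:ℝ) ≤ 4 * ν)]
  exact le_of_mul_le_mul_left hmul hβ

/-- Theorem 3.2(i): finite length of the G-FBS iterates in `ran Q`. -/
theorem stmt_9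
    {H : Type*} [NormedAddCommGroup H] [InnerProductSpace ℝ H] [CompleteSpace H]
    (Q : H →L[ℝ] H)
    (hQsym : ∀ x y : H, ⟪Q x, y⟫ = ⟪x, Q y⟫)
    (hQpos : ∀ x : H, 0 ≤ ⟪Q x, x⟫)
    (ν : ℝ) (hν : 0 < ν)
    (hνQ : ∀ w ∈ (LinearMap.ker (Q : H →ₗ[ℝ] H))ᗮ, ν * ‖w‖ ≤ ‖Q w‖)
    (β : ℝ) (hβ : 0 ≤ β)
    (hνβ : β < 2 * ν)
    (B : H → H)
    (hB : ∀ x y : H, ‖B x - B y‖ ^ 2 ≤ β * ⟪B x - B y, x - y⟫)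
    (hranB : Set.range B ⊆ Set.range Q)
    (A : H → Set H)
    (hA : ∀ x y u v : H, u ∈ A x → v ∈ A y → 0 ≤ ⟪u - v, x - y⟫)
    (x : ℕ → H)
    (hiter : ∀ k : ℕ, Q (x k) - B (x k) - Q (x (k + 1)) ∈ A (x (k + 1)))
    (xs : H) (hxs : -B xs ∈ A xs) :
    (∀ K : ℕ, ∑ k ∈ Finset.range (K + 1),
        ⟪Q (x (k + 1) - x k), x (k + 1) - x k⟫ ≤
        (2 * ν / (2 * ν - β)) * ⟪Q (x 0 - xs), x 0 - xs⟫) ∧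
      Summable (fun k : ℕ => ⟪Q (x (k + 1) - x k), x (k + 1) - x k⟫) := by
  set d : ℕ → ℝ := fun k => ⟪Q (x (k + 1) - x k), x (k + 1) - x k⟫ with hd
  set e : ℕ → ℝ := fun k => ⟪Q (x k - xs), x k - xs⟫ with he
  have hdnn : ∀ k, 0 ≤ d k := fun k => hQpos _
  have henn : ∀ k, 0 ≤ e k := fun k => hQpos _
  haveI : CompleteSpace (LinearMap.ker (Q : H →ₗ[ℝ] H)) :=
    (ContinuousLinearMap.isClosed_ker Q).completeSpace_coe
  -- per-step inequality
  have step : ∀ k, (2 * ν - β) * d k ≤ 2 * ν * (e k - e (k + 1)) := by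
    intro k
    set a := x k with ha
    set b := x (k + 1) with hb
    set v := B a - B xs with hv
    -- monotonicity
    have hmono := hA b xs (Q a - B a - Q b) (-B xs) (hiter k) hxs
    have hmono' : ⟪v, b - xs⟫ ≤ ⟪Q (a - b), b - xs⟫ := by
      have hrw : Q a - B a - Q b - -B xs = Q (a - b) - v := by
        simp only [hv, map_sub]; abel
      rw [hrw, inner_sub_left] at hmono
      linarith
    -- key identity
    have hid : 2 * ⟪Q (a - b), b - xs⟫ = e k - e (k + 1) - d k := by
      have h1 : ⟪Q a, b⟫ = ⟪Q b, a⟫ := by rw [hQsym a b, real_inner_comm]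
      have h2 : ⟪Q a, xs⟫ = ⟪Q xs, a⟫ := by rw [hQsym a xs, real_inner_comm]
      have h3 : ⟪Q b, xs⟫ = ⟪Q xs, b⟫ := by rw [hQsym b xs, real_inner_comm]
      simp only [he, hd, ← ha, ← hb, map_sub, inner_sub_left, inner_sub_right]
      linarith
    -- split the inner product
    have hsplit : ⟪v, b - xs⟫ = ⟪v, a - xs⟫ + ⟪v, b - a⟫ := by
      have hrw : b - xs = (a - xs) + (b - a) := by abel
      rw [hrw, inner_add_right]
    -- cocoercivity
    have hcoco : ‖v‖ ^ 2 ≤ β * ⟪v, a - xs⟫ := hB a xs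
    -- v ∈ ran Q, with a preimage in (ker Q)ᗮ
    obtain ⟨w1, hw1⟩ := hranB ⟨a, rfl⟩
    obtain ⟨w2, hw2⟩ := hranB ⟨xs, rfl⟩
    obtain ⟨y, hy, z, hz, hyz⟩ :=
      (LinearMap.ker (Q : H →ₗ[ℝ] H)).exists_add_mem_mem_orthogonal (w1 - w2)
    have hQz : Q z = v := by
      have hy0 : Q y = 0 := LinearMap.mem_ker.mp hy
      have hQw : Q (w1 - w2) = v := by rw [map_sub, hw1, hw2]
      rw [← hQw, hyz, map_add, hy0, zero_add]
    -- ν ⟪Q z, z⟫ ≤ ‖v‖²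
    have hzb : ν * ⟪Q z, z⟫ ≤ ‖v‖ ^ 2 := by
      have h1 := hνQ z hz
      have h2 : ⟪Q z, z⟫ ≤ ‖Q z‖ * ‖z‖ := real_inner_le_norm _ _
      have h3 : ‖Q z‖ = ‖v‖ := by rw [hQz]
      nlinarith [norm_nonneg z, norm_nonneg (Q z), hQpos z]
    -- Cauchy–Schwarz for the Q-form
    have hdk : d k = ⟪Q (b - a), b - a⟫ := rfl
    have hcs : ⟪v, b - a⟫ ^ 2 ≤ ⟪Q z, z⟫ * d k := by
      have hc0 := csQ_aux Q hQsym hQpos z (b - a)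
      have hvz : ⟪v, b - a⟫ = ⟪Q z, b - a⟫ := by rw [hQz]
      rw [hvz, hdk]
      exact hc0
    have hEd : 2 * (⟪v, a - xs⟫ + ⟪v, b - a⟫) ≤ e k - e (k + 1) - d k := by
      rw [← hsplit]; linarith
    by_cases hb0 : β = 0
    · -- then v = 0
      have hv0 : v = 0 := by
        have hc1 := hcoco
        rw [hb0, zero_mul] at hc1
        have : ‖v‖ = 0 := by nlinarith [norm_nonneg v]
        exact norm_eq_zero.mp this
      have h0 : ⟪v, a - xs⟫ = (0:ℝ) := by rw [hv0, inner_zero_left]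
      have h1 : ⟪v, b - a⟫ = (0:ℝ) := by rw [hv0, inner_zero_left]
      rw [h0, h1] at hEd
      rw [hb0]
      nlinarith [hν]
    · have hβpos : 0 < β := lt_of_le_of_ne hβ (Ne.symm hb0)
      exact realkey_aux ν β (‖v‖ ^ 2) ⟪v, b - a⟫ ⟪v, a - xs⟫ (d k)
        (e k - e (k + 1)) ⟪Q z, z⟫ hν hβpos (sq_nonneg _) (hdnn k) (hQpos z)
        hcoco hzb hcs hEd
  -- summation
  have hfac : 0 < 2 * ν - β := by linarith
  have sum1 : ∀ n : ℕ, ∑ k ∈ Finset.range n, d k ≤ (2 * ν / (2 * ν - β)) * e 0 := by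
    intro n
    have h1 : (2 * ν - β) * ∑ k ∈ Finset.range n, d k ≤ 2 * ν * e 0 := by
      calc (2 * ν - β) * ∑ k ∈ Finset.range n, d k
          = ∑ k ∈ Finset.range n, (2 * ν - β) * d k := by rw [Finset.mul_sum]
        _ ≤ ∑ k ∈ Finset.range n, 2 * ν * (e k - e (k + 1)) :=
            Finset.sum_le_sum fun k _ => step k
        _ = 2 * ν * (e 0 - e n) := by rw [← Finset.mul_sum, Finset.sum_range_sub' e n]
        _ ≤ 2 * ν * e 0 := by nlinarith [henn n, hν.le]
    rw [div_mul_eq_mul_div, le_div_iff₀ hfac]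
    linarith [h1]
  exact ⟨fun K => sum1 (K + 1), summable_of_sum_range_le hdnn sum1⟩
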